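/- Let λ > 0, let x₁, x₂ ∈ (0, 1) with x₁ ≠ x₂, and set z₁ = exp(λ·x₁), z₂ = exp(λ·x₂). Let a_f, a_k, τ_f, τ_k ∈ ℝ and define f(x) = a_f + τ_f·exp(λ·x), k(x) = a_k + τ_k·exp(λ·x), with f_j = f(x_j), k_j = k(x_j) for j = 1, 2. Assume M := k₂·(z₂ − z₁) + λ·x₂·z₂·(k₂ − k₁) ≠ 0 and set β = −(f₂·(z₂ − z₁) + λ·x₂·z₂·(f₂ − f₁))/M. If f₁·k₂ ≠ f₂·k₁ and x₁·z₁ − x₂·(1 − x₂)·z₂ ≠ 0, then the first-serve first-order condition (f(x₁) + β·k(x₁)) + x₁·λ·(τ_f + β·τ_k)·z₁ = x₂·(f(x₂) + β·k(x₂)) holds if and only if λ = (z₂ − z₁)/(x₁·z₁ − x₂·(1 − x₂)·z₂). -/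
import Mathlib


/-- in the softmax (CARA) parametrization, the first-serve first-order
condition holds iff λ = (z₂ − z₁)/(x₁·z₁ − x₂·(1 − x₂)·z₂). -/
theorem stmt16 (lam x₁ x₂ af ak τf τk z₁ z₂ β : ℝ)
    (hlam : 0 < lam)
    (hx₁ : x₁ ∈ Set.Ioo (0 : ℝ) 1) (hx₂ : x₂ ∈ Set.Ioo (0 : ℝ) 1) (hxne : x₁ ≠ x₂)
    (hz₁ : z₁ = Real.exp (lam * x₁)) (hz₂ : z₂ = Real.exp (lam * x₂))
    (f k : ℝ → ℝ)
    (hf : f = fun x => af + τf * Real.exp (lam * x))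
    (hk : k = fun x => ak + τk * Real.exp (lam * x))
    (hM : k x₂ * (z₂ - z₁) + lam * x₂ * z₂ * (k x₂ - k x₁) ≠ 0)
    (hβ : β = -(f x₂ * (z₂ - z₁) + lam * x₂ * z₂ * (f x₂ - f x₁)) /
        (k x₂ * (z₂ - z₁) + lam * x₂ * z₂ * (k x₂ - k x₁)))
    (hfk : f x₁ * k x₂ ≠ f x₂ * k x₁)
    (hden : x₁ * z₁ - x₂ * (1 - x₂) * z₂ ≠ 0) :
    ((f x₁ + β * k x₁) + x₁ * (lam * (τf + β * τk) * z₁) = x₂ * (f x₂ + β * k x₂)) ↔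
      lam = (z₂ - z₁) / (x₁ * z₁ - x₂ * (1 - x₂) * z₂) := by
  have hf1 : f x₁ = af + τf * z₁ := by rw [hf, hz₁]
  have hf2 : f x₂ = af + τf * z₂ := by rw [hf, hz₂]
  have hk1 : k x₁ = ak + τk * z₁ := by rw [hk, hz₁]
  have hk2 : k x₂ = ak + τk * z₂ := by rw [hk, hz₂]
  simp only [hf1, hf2, hk1, hk2] at hM hβ hfk ⊢
  set Mv : ℝ := (ak + τk * z₂) * (z₂ - z₁) + lam * x₂ * z₂ * ((ak + τk * z₂) - (ak + τk * z₁)) with hMv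
  have hβM : β * Mv = -((af + τf * z₂) * (z₂ - z₁) + lam * x₂ * z₂ * ((af + τf * z₂) - (af + τf * z₁))) := by
    rw [hβ]; field_simp
  have hD : (af + τf * z₁) * (ak + τk * z₂) - (af + τf * z₂) * (ak + τk * z₁) ≠ 0 :=
    sub_ne_zero.mpr hfk
  rw [eq_div_iff hden]
  constructor
  · intro h
    have key : ((af + τf * z₁) * (ak + τk * z₂) - (af + τf * z₂) * (ak + τk * z₁)) *
        ((z₂ - z₁) - lam * (x₁ * z₁ - x₂ * (1 - x₂) * z₂)) = 0 := by
      linear_combination Mv * h -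
        ((ak + τk * z₁) + x₁ * lam * τk * z₁ - x₂ * (ak + τk * z₂)) * hβM
    rcases mul_eq_zero.mp key with h' | h'
    · exact absurd h' hD
    · linarith
  · intro h
    have key : (((af + τf * z₁) + β * (ak + τk * z₁)) + x₁ * (lam * (τf + β * τk) * z₁) -
        x₂ * ((af + τf * z₂) + β * (ak + τk * z₂))) * Mv = 0 := by
      linear_combination
        -(((af + τf * z₁) * (ak + τk * z₂) - (af + τf * z₂) * (ak + τk * z₁))) * h +
        ((ak + τk * z₁) + x₁ * lam * τk * z₁ - x₂ * (ak + τk * z₂)) * hβM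
    rcases mul_eq_zero.mp key with h' | h'
    · linarith
    · exact absurd h' hM
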